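/- arXiv:1702.06381 — 3 statements merged into one kernel-verified Lean document; each statement's English description precedes it below -/
import Mathlib

section
/- Let B be a nonzero vector in ℂ^n and α, β > 0. The unique minimizer of the function f(x) = α‖x‖₂ + (β/2)‖x − B‖₂² over x ∈ ℂ^n is x̂ = max{‖B‖₂ − α/β, 0} · B/‖B‖₂. -/
open scoped InnerProductSpace

private lemma gkey (α β b r : ℝ) (hα : 0 < α) (hβ : 0 < β) (hb : 0 < b) (hr : 0 ≤ r)
    (hne : r ≠ max (b - α/β) 0) :
    α * max (b - α/β) 0 + β/2 * ((max (b - α/β) 0)^2 - 2*b*(max (b - α/β) 0) + b^2)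
      < α * r + β/2 * (r^2 - 2*b*r + b^2) := by
  rcases le_or_gt (b - α/β) 0 with h | h
  · rw [max_eq_right h] at *
    have hb' : β * b ≤ α := by
      have h2 : b ≤ α/β := by linarith
      calc β * b ≤ β * (α/β) := by nlinarith
        _ = α := by field_simp
    have hr' : 0 < r := lt_of_le_of_ne hr (Ne.symm hne)
    nlinarith [mul_nonneg hr'.le (sub_nonneg.mpr hb'), mul_pos hβ (mul_pos hr' hr')]
  · rw [max_eq_left h.le] at *
    have hpos : 0 < (r - (b - α/β))^2 :=
      lt_of_le_of_ne (sq_nonneg _) (Ne.symm (pow_ne_zero 2 (sub_ne_zero.mpr hne)))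
    have hq : β*(α/β) = α := by field_simp
    nlinarith [mul_pos hβ hpos, hq]

set_option maxHeartbeats 1000000 in
/-- complex soft-thresholding. For nonzero `B ∈ ℂ^n` and `α, β > 0`,
the unique minimizer of `f x = α‖x‖ + (β/2)‖x - B‖²` is
`max (‖B‖ - α/β) 0 • (‖B‖⁻¹ • B)`. -/
theorem stmt0 (n : ℕ) (B : EuclideanSpace ℂ (Fin n)) (hB : B ≠ 0)
    (α β : ℝ) (hα : 0 < α) (hβ : 0 < β)
    (f : EuclideanSpace ℂ (Fin n) → ℝ)
    (hf : ∀ x, f x = α * ‖x‖ + β / 2 * ‖x - B‖ ^ 2)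
    (xhat : EuclideanSpace ℂ (Fin n))
    (hxhat : xhat = max (‖B‖ - α / β) 0 • (‖B‖⁻¹ • B)) :
    (∀ y, f xhat ≤ f y) ∧ ∀ y, (∀ z, f y ≤ f z) → y = xhat := by
  have hb : (0:ℝ) < ‖B‖ := norm_pos_iff.mpr hB
  set t : ℝ := max (‖B‖ - α/β) 0 with htdef
  have ht0 : 0 ≤ t := le_max_right _ _
  have hxc : xhat = ((t * ‖B‖⁻¹ : ℝ) : ℂ) • B := by
    rw [hxhat, smul_smul, show ((t*‖B‖⁻¹:ℝ):ℂ) = (t*‖B‖⁻¹) • (1:ℂ) by simp,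
      smul_assoc, one_smul]
  have hnx : ‖xhat‖ = t := by
    rw [hxc, norm_smul, Complex.norm_real, Real.norm_eq_abs,
      abs_of_nonneg (mul_nonneg ht0 (inv_nonneg.mpr hb.le))]
    field_simp
  have hix : (⟪xhat, B⟫_ℂ).re = t * ‖B‖ := by
    rw [hxc, inner_smul_left, Complex.conj_ofReal, Complex.mul_re,
      Complex.ofReal_re, Complex.ofReal_im]
    have h1 : (⟪B,B⟫_ℂ).re = ‖B‖^2 := by
      simpa using inner_self_eq_norm_sq (𝕜 := ℂ) B
    have h2 : (⟪B,B⟫_ℂ).im = 0 := by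
      simpa using inner_self_im (𝕜 := ℂ) B
    rw [h1, h2]
    field_simp; ring
  have hfe : ∀ x, f x = α*‖x‖ + β/2*(‖x‖^2 - 2*(⟪x,B⟫_ℂ).re + ‖B‖^2) := by
    intro x
    rw [hf x]
    have := norm_sub_sq (𝕜 := ℂ) x B
    simp only [RCLike.re_to_complex] at this
    rw [this]
  have hfxhat : f xhat = α*t + β/2*(t^2 - 2*‖B‖*t + ‖B‖^2) := by
    rw [hfe, hnx, hix]; ring
  have hle : ∀ r : ℝ, 0 ≤ r →
      α*t + β/2*(t^2 - 2*‖B‖*t + ‖B‖^2) ≤ α*r + β/2*(r^2 - 2*‖B‖*r + ‖B‖^2) := by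
    intro r hr
    rcases eq_or_ne r t with h | h
    · rw [h]
    · exact (gkey α β ‖B‖ r hα hβ hb hr (htdef ▸ h)).le
  have hmin : ∀ y, f xhat ≤ f y := by
    intro y
    have hcs : (⟪y,B⟫_ℂ).re ≤ ‖y‖*‖B‖ := by
      simpa using re_inner_le_norm (𝕜 := ℂ) y B
    have h1 := hle ‖y‖ (norm_nonneg y)
    rw [hfxhat, hfe y]
    nlinarith
  refine ⟨hmin, fun y hy => ?_⟩
  have h1 : f y = f xhat := le_antisymm (hy xhat) (hmin y)
  have hcs : (⟪y,B⟫_ℂ).re ≤ ‖y‖*‖B‖ := by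
    simpa using re_inner_le_norm (𝕜 := ℂ) y B
  have h2 := hle ‖y‖ (norm_nonneg y)
  have hs : (⟪y,B⟫_ℂ).re = ‖y‖*‖B‖ := by
    refine le_antisymm hcs ?_
    rw [hfe y, hfxhat] at h1
    nlinarith
  have hrt : ‖y‖ = t := by
    by_contra h
    have := gkey α β ‖B‖ ‖y‖ hα hβ hb (norm_nonneg y) (htdef ▸ h)
    rw [hfe y, hfxhat, hs] at h1
    nlinarith
  rcases eq_or_lt_of_le ht0 with ht | ht
  · have hy0 : y = 0 := by
      rw [← norm_eq_zero, hrt, ← ht]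
    rw [hy0, hxc, ← ht]
    simp
  · -- t > 0, so ‖y‖ = t > 0
    have hinner : ⟪y,B⟫_ℂ = ((‖y‖ : ℝ) : ℂ) * ((‖B‖ : ℝ) : ℂ) := by
      have habs : ‖⟪y,B⟫_ℂ‖ ≤ ‖y‖*‖B‖ := norm_inner_le_norm y B
      have hsq := Complex.sq_norm ⟪y,B⟫_ℂ
      have him : (⟪y,B⟫_ℂ).im = 0 := by
        have h3 : ‖⟪y,B⟫_ℂ‖ ≤ ‖y‖*‖B‖ := habs
        have h4 : (‖⟪y,B⟫_ℂ‖)^2 ≤ (‖y‖*‖B‖)^2 := by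
          have := norm_nonneg ⟪y,B⟫_ℂ
          nlinarith
        rw [hsq, Complex.normSq_apply, hs] at h4
        nlinarith [sq_nonneg (⟪y,B⟫_ℂ).im]
      apply Complex.ext
      · simpa using hs
      · simpa using him
    have hmul : ⟪y,B⟫_ℂ = (‖y‖ : ℂ) * (‖B‖ : ℂ) := hinner
    have hcol : (‖B‖ : ℂ) • y = (‖y‖ : ℂ) • B := inner_eq_norm_mul_iff.mp hmul
    have hBc : (‖B‖:ℂ) ≠ 0 := by exact_mod_cast hb.ne'
    have hy' : y = ((‖B‖:ℂ)⁻¹ * (‖y‖:ℂ)) • B := by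
      rw [← smul_smul, ← hcol, smul_smul, inv_mul_cancel₀ hBc, one_smul]
    rw [hy', hxc, hrt]
    congr 1
    push_cast
    ring
end

section
/- Let A ∈ ℂ^{L×(KN)} be partitioned into blocks A = [A₁, …, A_K] with A_i ∈ ℂ^{L×N}, let B ∈ ℂ^{L×(GM)}, let W be a matrix of strictly positive real weights with row-chunk blocks W_i, and let α₁ > 0. If α₁ ≥ max_i ‖(A_iᴴ B) ∘ W_i^{∘(−1)}‖_F, then X = 0 minimizes F(X) = α₁ Σ_{i=1}^K ‖W_i ∘ X_i‖_F + (1/2)‖AX − B‖_F², where X_i denotes the i-th row-chunk block of X ∈ ℂ^{(KN)×(GM)}. -/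
open Finset Matrix
/-- Frobenius norm of a complex matrix. -/
noncomputable def fnorm4 {m n : Type*} [Fintype m] [Fintype n]
    (M : Matrix m n ℂ) : ℝ :=
  Real.sqrt (∑ i, ∑ j, ‖M i j‖ ^ 2)


lemma fnorm4_nonneg {m n : Type*} [Fintype m] [Fintype n] (M : Matrix m n ℂ) :
    0 ≤ fnorm4 M := Real.sqrt_nonneg _

lemma fnorm4_sq {m n : Type*} [Fintype m] [Fintype n] (M : Matrix m n ℂ) :
    fnorm4 M ^ 2 = ∑ i, ∑ j, ‖M i j‖ ^ 2 := by
  apply Real.sq_sqrt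
  positivity

-- key per-block Cauchy–Schwarz estimate
lemma key {n m : Type*} [Fintype n] [Fintype m]
    (Cc Xx : Matrix n m ℂ) (Wm : Matrix n m ℝ) (hW : ∀ a b, 0 < Wm a b)
    (α : ℝ) (hα : fnorm4 (fun a b => Cc a b * ((Wm a b)⁻¹ : ℝ)) ≤ α) :
    (∑ a, ∑ b, (Xx a b * (starRingEnd ℂ) (Cc a b))).re
      ≤ α * fnorm4 (fun a b => (Wm a b : ℂ) * Xx a b) := by
  have h1 : (∑ a, ∑ b, (Xx a b * (starRingEnd ℂ) (Cc a b))).re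
      = ∑ a, ∑ b, (Xx a b * (starRingEnd ℂ) (Cc a b)).re := by
    simp [Complex.re_sum]
  rw [h1]
  have h2 : ∑ a, ∑ b, (Xx a b * (starRingEnd ℂ) (Cc a b)).re
      ≤ ∑ a, ∑ b, (Wm a b * ‖Xx a b‖) * (‖Cc a b‖ * (Wm a b)⁻¹) := by
    apply Finset.sum_le_sum; intro a _
    apply Finset.sum_le_sum; intro b _
    have hpos := hW a b
    have : (Xx a b * (starRingEnd ℂ) (Cc a b)).re ≤ ‖Xx a b‖ * ‖Cc a b‖ := by
      calc (Xx a b * (starRingEnd ℂ) (Cc a b)).re ≤ ‖Xx a b * (starRingEnd ℂ) (Cc a b)‖ :=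
            Complex.re_le_norm _
        _ = ‖Xx a b‖ * ‖Cc a b‖ := by rw [norm_mul]; simp
    calc (Xx a b * (starRingEnd ℂ) (Cc a b)).re ≤ ‖Xx a b‖ * ‖Cc a b‖ := this
      _ = (Wm a b * ‖Xx a b‖) * (‖Cc a b‖ * (Wm a b)⁻¹) := by
          field_simp
  refine h2.trans ?_
  -- Cauchy-Schwarz over the product index
  have h3 : ∑ a, ∑ b, (Wm a b * ‖Xx a b‖) * (‖Cc a b‖ * (Wm a b)⁻¹)
      = ∑ p : n × m, (Wm p.1 p.2 * ‖Xx p.1 p.2‖) * (‖Cc p.1 p.2‖ * (Wm p.1 p.2)⁻¹) := by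
    rw [← Finset.univ_product_univ, Finset.sum_product]
  rw [h3]
  have cs := Finset.sum_mul_sq_le_sq_mul_sq Finset.univ
      (fun p : n × m => Wm p.1 p.2 * ‖Xx p.1 p.2‖)
      (fun p : n × m => ‖Cc p.1 p.2‖ * (Wm p.1 p.2)⁻¹)
  have hs1 : (∑ p : n × m, (Wm p.1 p.2 * ‖Xx p.1 p.2‖)^2)
      = fnorm4 (fun a b => (Wm a b : ℂ) * Xx a b) ^ 2 := by
    rw [fnorm4_sq (fun a b => (Wm a b : ℂ) * Xx a b), ← Finset.univ_product_univ, Finset.sum_product]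
    congr 1; ext a; congr 1; ext b
    rw [norm_mul, Complex.norm_real, Real.norm_eq_abs, abs_of_pos (hW a b)]
  have hs2 : (∑ p : n × m, (‖Cc p.1 p.2‖ * (Wm p.1 p.2)⁻¹)^2)
      = fnorm4 (fun a b => Cc a b * ((Wm a b)⁻¹ : ℝ)) ^ 2 := by
    rw [fnorm4_sq (fun a b => Cc a b * ((Wm a b)⁻¹ : ℝ)), ← Finset.univ_product_univ, Finset.sum_product]
    congr 1; ext a; congr 1; ext b
    rw [norm_mul, Complex.norm_real, Real.norm_eq_abs, abs_of_pos (inv_pos.mpr (hW a b))]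
  rw [hs1, hs2] at cs
  set S := ∑ p : n × m, (Wm p.1 p.2 * ‖Xx p.1 p.2‖) * (‖Cc p.1 p.2‖ * (Wm p.1 p.2)⁻¹)
  have hα0 : 0 ≤ α := le_trans (fnorm4_nonneg _) hα
  have hS0 : 0 ≤ S := Finset.sum_nonneg fun p _ => mul_nonneg (mul_nonneg (hW p.1 p.2).le (norm_nonneg _)) (mul_nonneg (norm_nonneg _) (inv_nonneg.mpr (hW p.1 p.2).le))
  have h4 : S ≤ fnorm4 (fun a b => (Wm a b : ℂ) * Xx a b)
      * fnorm4 (fun a b => Cc a b * ((Wm a b)⁻¹ : ℝ)) := by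
    have hprod : 0 ≤ fnorm4 (fun a b => (Wm a b : ℂ) * Xx a b)
        * fnorm4 (fun a b => Cc a b * ((Wm a b)⁻¹ : ℝ)) :=
      mul_nonneg (fnorm4_nonneg _) (fnorm4_nonneg _)
    nlinarith [cs]
  exact h4.trans (by
    rw [mul_comm]
    exact mul_le_mul_of_nonneg_right hα (fnorm4_nonneg _))

lemma norm_sub_sq_c (z w : ℂ) :
    ‖z - w‖ ^ 2 = ‖z‖ ^ 2 + ‖w‖ ^ 2 - 2 * (z * (starRingEnd ℂ) w).re := by
  simp only [← Complex.normSq_eq_norm_sq, Complex.normSq_sub]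

lemma trace_form {p q : Type*} [Fintype p] [Fintype q] (Mt Pt : Matrix p q ℂ) :
    ∑ a, ∑ b, Mt a b * (starRingEnd ℂ) (Pt a b) = (Mt * Ptᴴ).trace := by
  simp [Matrix.trace, Matrix.mul_apply, Matrix.diag, Matrix.conjTranspose_apply]

/-- if `α₁ ≥ max_i ‖(Aᵢᴴ B) ∘ Wᵢ^{∘(-1)}‖_F`, then `X = 0` minimizes
`F X = α₁ ∑ᵢ ‖Wᵢ ∘ Xᵢ‖_F + (1/2)‖A X - B‖_F²`, where `A = [A₁,…,A_K]` acts on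
row-chunked `X` via `A X = ∑ᵢ Aᵢ Xᵢ`. -/
theorem stmt4 (L K N G M : ℕ)
    (A : Fin K → Matrix (Fin L) (Fin N) ℂ)
    (B : Matrix (Fin L) (Fin (G * M)) ℂ)
    (W : Fin K → Matrix (Fin N) (Fin (G * M)) ℝ)
    (hW : ∀ i a b, 0 < W i a b)
    (α₁ : ℝ) (hα₁ : 0 < α₁)
    (hthr : ∀ i, fnorm4 (fun a b => ((A i)ᴴ * B) a b * ((W i a b)⁻¹ : ℝ)) ≤ α₁)
    (F : (Fin K → Matrix (Fin N) (Fin (G * M)) ℂ) → ℝ)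
    (hF : ∀ X, F X = α₁ * ∑ i, fnorm4 (fun a b => (W i a b : ℂ) * X i a b)
        + 1 / 2 * (fnorm4 ((∑ i, A i * X i) - B)) ^ 2) :
    ∀ X, F 0 ≤ F X := by
  intro X
  rw [hF, hF]
  set Y : Matrix (Fin L) (Fin (G * M)) ℂ := ∑ i, A i * X i with hY
  -- F 0 simplification
  have hF0l : (α₁ * ∑ i, fnorm4 (fun a b => (W i a b : ℂ) * (0 : Fin K → Matrix (Fin N) (Fin (G * M)) ℂ) i a b)
      + 1 / 2 * (fnorm4 ((∑ i, A i * (0 : Fin K → Matrix (Fin N) (Fin (G * M)) ℂ) i) - B)) ^ 2)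
      = 1 / 2 * fnorm4 B ^ 2 := by
    simp only [Pi.zero_apply, Matrix.zero_apply, mul_zero, Matrix.mul_zero,
      Finset.sum_const_zero, zero_sub]
    rw [show fnorm4 (fun (_ : Fin N) (_ : Fin (G*M)) => (0:ℂ)) = 0 by simp [fnorm4]]
    rw [show fnorm4 (-B) = fnorm4 B by simp [fnorm4, Matrix.neg_apply]]
    simp
  rw [hF0l]
  -- per-block bound
  have hTi : ∀ i : Fin K, ((X i * ((A i)ᴴ * B)ᴴ).trace).re
      ≤ α₁ * fnorm4 (fun a b => (W i a b : ℂ) * X i a b) := by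
    intro i
    rw [← trace_form]
    exact key ((A i)ᴴ * B) (X i) (W i) (hW i) α₁ (hthr i)
  -- cross term
  have hT : (∑ a, ∑ b, Y a b * (starRingEnd ℂ) (B a b)).re
      = ∑ i, ((X i * ((A i)ᴴ * B)ᴴ).trace).re := by
    rw [trace_form]
    have : (Y * Bᴴ).trace = ∑ i, (X i * ((A i)ᴴ * B)ᴴ).trace := by
      rw [hY, Matrix.sum_mul, Matrix.trace_sum]
      refine Finset.sum_congr rfl fun i _ => ?_
      rw [Matrix.conjTranspose_mul, Matrix.conjTranspose_conjTranspose, ← Matrix.mul_assoc]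
      exact (Matrix.trace_mul_cycle (X i) Bᴴ (A i)).symm
    rw [this, Complex.re_sum]
  -- expansion of the squared norm
  have hexp : fnorm4 B ^ 2 - 2 * (∑ a, ∑ b, Y a b * (starRingEnd ℂ) (B a b)).re
      ≤ fnorm4 (Y - B) ^ 2 := by
    rw [fnorm4_sq, fnorm4_sq, Complex.re_sum]
    have : ∀ a, (∑ b, Y a b * (starRingEnd ℂ) (B a b)).re
        = ∑ b, (Y a b * (starRingEnd ℂ) (B a b)).re := fun a => Complex.re_sum _ _
    simp only [this]
    rw [Finset.mul_sum, ← Finset.sum_sub_distrib]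
    apply Finset.sum_le_sum; intro a _
    rw [Finset.mul_sum, ← Finset.sum_sub_distrib]
    apply Finset.sum_le_sum; intro b _
    rw [Matrix.sub_apply, norm_sub_sq_c]
    nlinarith [sq_nonneg ‖Y a b‖]
  -- assemble
  have hTsum : (∑ a, ∑ b, Y a b * (starRingEnd ℂ) (B a b)).re
      ≤ α₁ * ∑ i, fnorm4 (fun a b => (W i a b : ℂ) * X i a b) := by
    rw [hT, Finset.mul_sum]
    exact Finset.sum_le_sum fun i _ => hTi i
  linarith [hexp, hTsum]
end

section
/- With the setting of the weighted group-lasso functional F(X) = α₁ Σ_{i=1}^K ‖W_i ∘ X_i‖_F + (1/2)‖AX − B‖_F², the zero matrix is a minimizer of F if and only if ‖(A_iᴴ B) ∘ W_i^{∘(−1)}‖_F ≤ α₁ for all i = 1, …, K. -/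
open Finset Matrix

noncomputable def fnorm5 {m n : Type*} [Fintype m] [Fintype n]
    (M : Matrix m n ℂ) : ℝ :=
  Real.sqrt (∑ i, ∑ j, ‖M i j‖ ^ 2)

namespace Stmt5Aux

variable {l m n : Type*} [Fintype l] [Fintype m] [Fintype n]

lemma sum_sq_nonneg (M : Matrix m n ℂ) : 0 ≤ ∑ i, ∑ j, ‖M i j‖ ^ 2 :=
  Finset.sum_nonneg fun _ _ => Finset.sum_nonneg fun _ _ => sq_nonneg _

lemma fnorm5_nonneg (M : Matrix m n ℂ) : 0 ≤ fnorm5 M := Real.sqrt_nonneg _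

lemma fnorm5_sq (M : Matrix m n ℂ) : fnorm5 M ^ 2 = ∑ i, ∑ j, ‖M i j‖ ^ 2 :=
  Real.sq_sqrt (sum_sq_nonneg M)

lemma norm_sub_sq' (p b : ℂ) :
    ‖p - b‖ ^ 2 = ‖p‖ ^ 2 + ‖b‖ ^ 2 - 2 * ((starRingEnd ℂ) p * b).re := by
  simp only [Complex.sq_norm, Complex.normSq_apply, Complex.mul_re,
    Complex.sub_re, Complex.sub_im, Complex.conj_re, Complex.conj_im]
  ring

lemma expand (P B : Matrix m n ℂ) :
    fnorm5 (P - B) ^ 2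
      = (∑ i, ∑ j, ‖P i j‖ ^ 2) + (∑ i, ∑ j, ‖B i j‖ ^ 2)
        - 2 * (∑ i, ∑ j, ((starRingEnd ℂ) (P i j) * B i j).re) := by
  rw [fnorm5_sq]
  have : ∀ i j, ‖(P - B) i j‖ ^ 2
      = ‖P i j‖ ^ 2 + ‖B i j‖ ^ 2 - 2 * ((starRingEnd ℂ) (P i j) * B i j).re := by
    intro i j
    rw [Matrix.sub_apply]
    exact norm_sub_sq' _ _
  simp only [this, Finset.sum_sub_distrib, Finset.sum_add_distrib, Finset.mul_sum]

lemma cs (u v : Matrix m n ℂ) :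
    (∑ i, ∑ j, ((starRingEnd ℂ) (u i j) * v i j).re) ≤ fnorm5 u * fnorm5 v := by
  have h1 : (∑ i, ∑ j, ((starRingEnd ℂ) (u i j) * v i j).re)
      ≤ ∑ i, ∑ j, ‖u i j‖ * ‖v i j‖ := by
    refine Finset.sum_le_sum fun i _ => Finset.sum_le_sum fun j _ => ?_
    calc ((starRingEnd ℂ) (u i j) * v i j).re ≤ ‖(starRingEnd ℂ) (u i j) * v i j‖ :=
          Complex.re_le_norm _
      _ = ‖u i j‖ * ‖v i j‖ := by rw [norm_mul, RCLike.norm_conj]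
  refine h1.trans ?_
  unfold fnorm5
  rw [← Finset.sum_product', ← Finset.sum_product', ← Finset.sum_product']
  have h2 := Finset.sum_mul_sq_le_sq_mul_sq (Finset.univ ×ˢ Finset.univ)
    (fun x : m × n => ‖u x.1 x.2‖) (fun x : m × n => ‖v x.1 x.2‖)
  have h3 : 0 ≤ ∑ x ∈ Finset.univ ×ˢ Finset.univ, ‖u x.1 x.2‖ * ‖v x.1 x.2‖ :=
    Finset.sum_nonneg fun x _ => mul_nonneg (norm_nonneg _) (norm_nonneg _)
  calc ∑ x ∈ Finset.univ ×ˢ Finset.univ, ‖u x.1 x.2‖ * ‖v x.1 x.2‖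
      = Real.sqrt ((∑ x ∈ Finset.univ ×ˢ Finset.univ, ‖u x.1 x.2‖ * ‖v x.1 x.2‖) ^ 2) :=
        (Real.sqrt_sq h3).symm
    _ ≤ Real.sqrt ((∑ x ∈ Finset.univ ×ˢ Finset.univ, ‖u x.1 x.2‖ ^ 2) *
          ∑ x ∈ Finset.univ ×ˢ Finset.univ, ‖v x.1 x.2‖ ^ 2) := Real.sqrt_le_sqrt h2
    _ = _ := Real.sqrt_mul (Finset.sum_nonneg fun x _ => sq_nonneg _) _

lemma tr_form (M B : Matrix m n ℂ) :
    ∑ a, ∑ c, (starRingEnd ℂ) (M a c) * B a c = Matrix.trace (Mᴴ * B) := by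
  simp only [Matrix.trace, Matrix.diag, Matrix.mul_apply, Matrix.conjTranspose_apply]
  exact Finset.sum_comm

lemma swap_sum (A : Matrix l m ℂ) (X : Matrix m n ℂ) (B : Matrix l n ℂ) :
    ∑ a, ∑ c, (starRingEnd ℂ) ((A * X) a c) * B a c
      = ∑ p, ∑ c, (starRingEnd ℂ) (X p c) * (Aᴴ * B) p c := by
  rw [tr_form, tr_form, Matrix.conjTranspose_mul, Matrix.mul_assoc]

end Stmt5Aux

set_option maxHeartbeats 1000000 in
open Stmt5Aux in
/-- zero is a minimizer of the weighted group-lasso functional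
`F X = α₁ ∑ᵢ ‖Wᵢ ∘ Xᵢ‖_F + (1/2)‖A X - B‖_F²` if and only if
`‖(Aᵢᴴ B) ∘ Wᵢ^{∘(-1)}‖_F ≤ α₁` for all `i`. -/
theorem stmt5 (L K N G M : ℕ)
    (A : Fin K → Matrix (Fin L) (Fin N) ℂ)
    (B : Matrix (Fin L) (Fin (G * M)) ℂ)
    (W : Fin K → Matrix (Fin N) (Fin (G * M)) ℝ)
    (hW : ∀ i a b, 0 < W i a b)
    (α₁ : ℝ) (hα₁ : 0 < α₁)
    (F : (Fin K → Matrix (Fin N) (Fin (G * M)) ℂ) → ℝ)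
    (hF : ∀ X, F X = α₁ * ∑ i, fnorm5 (fun a b => (W i a b : ℂ) * X i a b)
        + 1 / 2 * (fnorm5 ((∑ i, A i * X i) - B)) ^ 2) :
    (∀ X, F 0 ≤ F X) ↔
      ∀ i, fnorm5 (fun a b => ((A i)ᴴ * B) a b * ((W i a b)⁻¹ : ℝ)) ≤ α₁ := by
  -- notation
  set SB : ℝ := ∑ l, ∑ c, ‖B l c‖ ^ 2 with hSB
  have hF0 : F 0 = 1 / 2 * SB := by
    rw [hF]
    have h1 : ∀ j : Fin K, fnorm5 (fun a b => (W j a b : ℂ) *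
        (0 : Fin K → Matrix (Fin N) (Fin (G * M)) ℂ) j a b) = 0 := by
      intro j
      simp [fnorm5]
    have h2 : (∑ j, A j * (0 : Fin K → Matrix (Fin N) (Fin (G * M)) ℂ) j) -
        B = -B := by
      simp
    rw [h2]
    have h3 : fnorm5 (-B) ^ 2 = SB := by
      rw [fnorm5_sq]
      simp [hSB]
    simp only [h1, Finset.sum_const_zero, mul_zero, h3, zero_add]
  constructor
  · -- forward
    intro hmin i
    set C : Matrix (Fin N) (Fin (G * M)) ℂ := (A i)ᴴ * B with hC
    set s : ℝ := fnorm5 (fun a b => C a b * ((W i a b)⁻¹ : ℝ)) with hs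
    have hs0 : 0 ≤ s := fnorm5_nonneg _
    have hs2 : s ^ 2 = ∑ a, ∑ b, Complex.normSq (C a b) * ((W i a b)⁻¹) ^ 2 := by
      rw [hs]; refine (fnorm5_sq _).trans ?_
      refine Finset.sum_congr rfl fun a _ => Finset.sum_congr rfl fun b _ => ?_
      rw [norm_mul, mul_pow, Complex.sq_norm, Complex.norm_real,
        Real.norm_eq_abs, sq_abs]
    -- the test matrix
    set D : Matrix (Fin N) (Fin (G * M)) ℂ :=
      fun a b => C a b * (((W i a b)⁻¹ : ℝ) : ℂ) ^ 2 with hD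
    set Q : ℝ := ∑ l, ∑ c, ‖(A i * D) l c‖ ^ 2 with hQ
    have hQ0 : 0 ≤ Q := sum_sq_nonneg _
    have key : ∀ t : ℝ, 0 < t → s ^ 2 ≤ α₁ * s + t * Q := by
      intro t ht
      set X : Fin K → Matrix (Fin N) (Fin (G * M)) ℂ :=
        fun j => if j = i then (t : ℂ) • D else 0 with hX
      have hXi : X i = (t : ℂ) • D := by simp [hX]
      -- sum of block norms
      have hblocks : ∑ j, fnorm5 (fun a b => (W j a b : ℂ) * X j a b) = t * s := by
        rw [Fintype.sum_eq_single i]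
        · -- the i-th block
          have hpt : ∀ a b, ‖(W i a b : ℂ) * X i a b‖ ^ 2
              = t ^ 2 * ‖C a b * (((W i a b)⁻¹ : ℝ) : ℂ)‖ ^ 2 := by
            intro a b
            have hWne : (W i a b) ≠ 0 := (hW i a b).ne'
            rw [hXi]
            have hWc : ((W i a b : ℝ) : ℂ) ≠ 0 := by exact_mod_cast hWne
            have : (W i a b : ℂ) * ((t : ℂ) • D) a b
                = (t : ℂ) * (C a b * (((W i a b)⁻¹ : ℝ) : ℂ)) := by
              rw [Matrix.smul_apply, hD]
              push_cast
              linear_combination ((t : ℂ) * C a b * ((W i a b : ℂ))⁻¹) * mul_inv_cancel₀ hWc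
            rw [this, norm_mul, mul_pow, Complex.norm_real, Real.norm_eq_abs,
              abs_of_pos ht]
          have : (fun a b => ‖(W i a b : ℂ) * X i a b‖ ^ 2) = fun a b =>
              t ^ 2 * ‖C a b * (((W i a b)⁻¹ : ℝ) : ℂ)‖ ^ 2 := by
            funext a b; exact hpt a b
          unfold fnorm5
          simp only [hpt, ← Finset.mul_sum]
          rw [Real.sqrt_mul (sq_nonneg t), Real.sqrt_sq ht.le]
          rw [hs]; unfold fnorm5; rfl
        · intro j hj
          have : X j = 0 := by simp [hX, hj]
          rw [this]
          simp [fnorm5]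
      -- the product term
      have hP : (∑ j, A j * X j) = A i * ((t : ℂ) • D) := by
        rw [Fintype.sum_eq_single i]
        · rw [hXi]
        · intro j hj
          have : X j = 0 := by simp [hX, hj]
          rw [this, Matrix.mul_zero]
      have hip : ∑ l', ∑ c, ((starRingEnd ℂ) ((A i * ((t : ℂ) • D)) l' c) * B l' c).re
          = t * s ^ 2 := by
        have e2 : ∑ l', ∑ c, (starRingEnd ℂ) ((A i * ((t : ℂ) • D)) l' c) * B l' c
            = ((t * s ^ 2 : ℝ) : ℂ) := by
          rw [swap_sum]
          have hpt : ∀ p c, (starRingEnd ℂ) (((t : ℂ) • D) p c) * ((A i)ᴴ * B) p c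
              = (((t * (Complex.normSq (C p c) * ((W i p c)⁻¹) ^ 2)) : ℝ) : ℂ) := by
            intro p c
            rw [Matrix.smul_apply, hD, ← hC, smul_eq_mul]
            simp only [_root_.map_mul, map_pow, Complex.conj_ofReal]
            rw [Complex.ofReal_mul, Complex.ofReal_mul, Complex.ofReal_pow,
              Complex.normSq_eq_conj_mul_self]
            push_cast
            ring
          simp only [hpt]
          have hr : (t * s ^ 2)
              = ∑ p, ∑ c, t * (Complex.normSq (C p c) * ((W i p c)⁻¹) ^ 2) := by
            rw [hs2, Finset.mul_sum]
            exact Finset.sum_congr rfl fun p _ => by rw [Finset.mul_sum]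
          rw [hr]
          push_cast
          rfl
        have h5 := congrArg Complex.re e2
        simp only [Complex.re_sum, Complex.ofReal_re] at h5
        exact h5
      -- the squared-norm term
      have hSP : ∑ l', ∑ c, ‖(A i * ((t : ℂ) • D)) l' c‖ ^ 2 = t ^ 2 * Q := by
        rw [Matrix.mul_smul, hQ]
        simp only [Matrix.smul_apply, smul_eq_mul, norm_mul, Complex.norm_real,
          Real.norm_eq_abs, abs_of_pos ht, mul_pow, ← Finset.mul_sum]
      -- use minimality
      have h0 := hmin X
      rw [hF X, hF0, hblocks, hP] at h0
      rw [expand (A i * ((t : ℂ) • D)) B] at h0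
      rw [hip, hSP, ← hSB] at h0
      have h1 : t * s ^ 2 ≤ t * (α₁ * s + t * Q) := by nlinarith [h0, ht.le, hQ0]
      exact le_of_mul_le_mul_left h1 ht
    have hsq : s ^ 2 ≤ α₁ * s := by
      refine le_of_forall_pos_le_add fun ε hε => ?_
      have hQ1 : (0 : ℝ) < Q + 1 := by linarith
      have ht : 0 < ε / (Q + 1) := div_pos hε hQ1
      have htQ : (ε / (Q + 1)) * Q ≤ ε := by
        rw [div_mul_eq_mul_div, div_le_iff₀ hQ1]
        nlinarith
      have := key (ε / (Q + 1)) ht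
      linarith
    rcases hs0.eq_or_lt with hcase | hcase
    · rw [← hcase]; exact hα₁.le
    · nlinarith
  · -- backward
    intro h X
    rw [hF X, hF0]
    set P : Matrix (Fin L) (Fin (G * M)) ℂ := ∑ j, A j * X j with hP
    have hexp := expand P B
    have hSP : 0 ≤ ∑ l', ∑ c, ‖P l' c‖ ^ 2 := sum_sq_nonneg _
    -- decompose the inner product
    have hdec : ∑ l', ∑ c, (starRingEnd ℂ) (P l' c) * B l' c
        = ∑ j, ∑ p, ∑ c, (starRingEnd ℂ) (X j p c) * ((A j)ᴴ * B) p c := by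
      rw [tr_form, hP, Matrix.conjTranspose_sum, Matrix.sum_mul, Matrix.trace_sum]
      exact Finset.sum_congr rfl fun j _ => by
        rw [Matrix.conjTranspose_mul, Matrix.mul_assoc, ← tr_form]
    have hre : ∑ l', ∑ c, ((starRingEnd ℂ) (P l' c) * B l' c).re
        = ∑ j, ∑ p, ∑ c, ((starRingEnd ℂ) (X j p c) * ((A j)ᴴ * B) p c).re := by
      have := congrArg Complex.re hdec
      simpa [Complex.re_sum] using this
    -- bound each block
    have hblock : ∀ j : Fin K, ∑ p, ∑ c, ((starRingEnd ℂ) (X j p c) * ((A j)ᴴ * B) p c).re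
        ≤ fnorm5 (fun a b => (W j a b : ℂ) * X j a b) * α₁ := by
      intro j
      have hrw : ∀ p c, (starRingEnd ℂ) (X j p c) * ((A j)ᴴ * B) p c
          = (starRingEnd ℂ) ((W j p c : ℂ) * X j p c) *
            (((A j)ᴴ * B) p c * (((W j p c)⁻¹ : ℝ) : ℂ)) := by
        intro p c
        have hone : (W j p c : ℂ) * (((W j p c)⁻¹ : ℝ) : ℂ) = 1 := by
          rw [← Complex.ofReal_mul, mul_inv_cancel₀ (hW j p c).ne', Complex.ofReal_one]
        calc (starRingEnd ℂ) (X j p c) * ((A j)ᴴ * B) p c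
            = ((W j p c : ℂ) * (((W j p c)⁻¹ : ℝ) : ℂ)) *
              ((starRingEnd ℂ) (X j p c) * ((A j)ᴴ * B) p c) := by rw [hone, one_mul]
          _ = (starRingEnd ℂ) ((W j p c : ℂ) * X j p c) *
              (((A j)ᴴ * B) p c * (((W j p c)⁻¹ : ℝ) : ℂ)) := by
              rw [_root_.map_mul, Complex.conj_ofReal]; ring
      simp only [hrw]
      calc ∑ p, ∑ c, ((starRingEnd ℂ) ((W j p c : ℂ) * X j p c) *
            (((A j)ᴴ * B) p c * (((W j p c)⁻¹ : ℝ) : ℂ))).re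
          ≤ fnorm5 (fun a b => (W j a b : ℂ) * X j a b) *
            fnorm5 (fun a b => ((A j)ᴴ * B) a b * (((W j a b)⁻¹ : ℝ) : ℂ)) :=
            cs _ _
        _ ≤ fnorm5 (fun a b => (W j a b : ℂ) * X j a b) * α₁ :=
            mul_le_mul_of_nonneg_left (h j) (fnorm5_nonneg _)
    have hsum : ∑ l', ∑ c, ((starRingEnd ℂ) (P l' c) * B l' c).re
        ≤ α₁ * ∑ j, fnorm5 (fun a b => (W j a b : ℂ) * X j a b) := by
      rw [hre, Finset.mul_sum]
      refine Finset.sum_le_sum fun j _ => ?_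
      exact (hblock j).trans_eq (mul_comm _ _)
    have hnn : 0 ≤ α₁ * ∑ j, fnorm5 (fun a b => (W j a b : ℂ) * X j a b) := by
      exact mul_nonneg hα₁.le (Finset.sum_nonneg fun j _ => fnorm5_nonneg _)
    rw [hexp]
    linarith
end
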